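/- Let ε ≥ 0, w ≥ 0, and a, b > 0. Let Σ ∈ ℂ^{ℓ×q} be diagonal with pairwise distinct positive diagonal entries, κ = κ(Σ), K = K(Σ). Let Δ ∈ ℂ^{ℓ×q}, let Ω ∈ ℂ^{ℓ×ℓ} be Hermitian and Λ ∈ ℂ^{q×q}, and set Δ₁ = (I_ℓ+Ω)(Δ+Σ)(I_q+Λ) − Σ. If ‖Δ‖ ≤ ε/(κ^a K^b) and ‖Ω‖, ‖Λ‖ ≤ wε/(κ^a K^{b+1}), then ‖Δ₁‖ ≤ ((1+wε)² + 2w + w²ε)·ε/(κ^a K^b). -/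

import Mathlib

open Matrix Filter
open scoped BigOperators ComplexOrder

/-- Row-sum norm `‖A‖₁ = max_i ∑_j |A i j|`. -/
noncomputable def rowNorm {a b : ℕ} (A : Matrix (Fin a) (Fin b) ℂ) : ℝ :=
  ⨆ i, ∑ j, ‖A i j‖

/-- The matrix norm `‖A‖ = max (‖A‖₁, ‖Aᴴ‖₁)` used throughout. -/
noncomputable def mnorm {a b : ℕ} (A : Matrix (Fin a) (Fin b) ℂ) : ℝ :=
  max (rowNorm A) (rowNorm Aᴴ)

/-- The `ℓ × q` diagonal matrix with real diagonal entries `σ`. -/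
noncomputable def diagMat (l q : ℕ) (σ : Fin q → ℝ) : Matrix (Fin l) (Fin q) ℂ :=
  fun i j => if (i : ℕ) = (j : ℕ) then (σ j : ℂ) else 0

/-- `κ(Σ) = max (1, max_i 1/σ_i, max_{i≠j} (1/|σ_i−σ_j| + 1/(σ_i+σ_j)))`. -/
noncomputable def kappa {q : ℕ} (σ : Fin q → ℝ) : ℝ :=
  max 1 (max (⨆ i, 1 / σ i)
    (⨆ i, ⨆ j, if i ≠ j then 1 / |σ i - σ j| + 1 / (σ i + σ j) else 0))

/-- `K(Σ) = max (1, max_i σ_i)`. -/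
noncomputable def Kbig {q : ℕ} (σ : Fin q → ℝ) : ℝ :=
  max 1 (⨆ i, σ i)

lemma rowNorm_nonneg {a b : ℕ} (A : Matrix (Fin a) (Fin b) ℂ) : 0 ≤ rowNorm A :=
  Real.iSup_nonneg fun _ => Finset.sum_nonneg fun _ _ => norm_nonneg _

lemma row_le_rowNorm {a b : ℕ} (A : Matrix (Fin a) (Fin b) ℂ) (i : Fin a) :
    ∑ j, ‖A i j‖ ≤ rowNorm A := by
  unfold rowNorm; exact le_ciSup (Set.finite_range fun i => ∑ j, ‖A i j‖).bddAbove i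

lemma rowNorm_le {a b : ℕ} (A : Matrix (Fin a) (Fin b) ℂ) {c : ℝ} (hc : 0 ≤ c)
    (h : ∀ i, ∑ j, ‖A i j‖ ≤ c) : rowNorm A ≤ c :=
  Real.iSup_le h hc

lemma mnorm_nonneg {a b : ℕ} (A : Matrix (Fin a) (Fin b) ℂ) : 0 ≤ mnorm A :=
  le_trans (rowNorm_nonneg A) (le_max_left _ _)

lemma rowNorm_add {a b : ℕ} (A B : Matrix (Fin a) (Fin b) ℂ) :
    rowNorm (A + B) ≤ rowNorm A + rowNorm B := by
  apply rowNorm_le _ (add_nonneg (rowNorm_nonneg A) (rowNorm_nonneg B))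
  intro i
  calc ∑ j, ‖(A + B) i j‖ ≤ ∑ j, (‖A i j‖ + ‖B i j‖) :=
        Finset.sum_le_sum fun j _ => norm_add_le _ _
    _ = (∑ j, ‖A i j‖) + ∑ j, ‖B i j‖ := Finset.sum_add_distrib
    _ ≤ rowNorm A + rowNorm B := add_le_add (row_le_rowNorm A i) (row_le_rowNorm B i)

lemma mnorm_add {a b : ℕ} (A B : Matrix (Fin a) (Fin b) ℂ) :
    mnorm (A + B) ≤ mnorm A + mnorm B := by
  unfold mnorm
  rw [conjTranspose_add]
  apply max_le
  · exact le_trans (rowNorm_add A B) (add_le_add (le_max_left _ _) (le_max_left _ _))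
  · exact le_trans (rowNorm_add Aᴴ Bᴴ) (add_le_add (le_max_right _ _) (le_max_right _ _))

lemma rowNorm_mul {a b c : ℕ} (A : Matrix (Fin a) (Fin b) ℂ) (B : Matrix (Fin b) (Fin c) ℂ) :
    rowNorm (A * B) ≤ rowNorm A * rowNorm B := by
  apply rowNorm_le _ (mul_nonneg (rowNorm_nonneg A) (rowNorm_nonneg B))
  intro i
  calc ∑ j, ‖(A * B) i j‖
      ≤ ∑ j, ∑ k, ‖A i k‖ * ‖B k j‖ := by
        apply Finset.sum_le_sum; intro j _
        simp only [Matrix.mul_apply]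
        exact le_trans (norm_sum_le _ _)
          (le_of_eq (Finset.sum_congr rfl fun k _ => norm_mul _ _))
    _ = ∑ k, ‖A i k‖ * ∑ j, ‖B k j‖ := by
        rw [Finset.sum_comm]; simp [Finset.mul_sum]
    _ ≤ ∑ k, ‖A i k‖ * rowNorm B := by
        apply Finset.sum_le_sum; intro k _
        exact mul_le_mul_of_nonneg_left (row_le_rowNorm B k) (norm_nonneg _)
    _ = (∑ k, ‖A i k‖) * rowNorm B := by rw [Finset.sum_mul]
    _ ≤ rowNorm A * rowNorm B :=
        mul_le_mul_of_nonneg_right (row_le_rowNorm A i) (rowNorm_nonneg B)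

lemma mnorm_mul {a b c : ℕ} (A : Matrix (Fin a) (Fin b) ℂ) (B : Matrix (Fin b) (Fin c) ℂ) :
    mnorm (A * B) ≤ mnorm A * mnorm B := by
  unfold mnorm
  rw [conjTranspose_mul]
  apply max_le
  · exact le_trans (rowNorm_mul A B)
      (mul_le_mul (le_max_left _ _) (le_max_left _ _) (rowNorm_nonneg B)
        (le_trans (rowNorm_nonneg A) (le_max_left _ _)))
  · calc rowNorm (Bᴴ * Aᴴ) ≤ rowNorm Bᴴ * rowNorm Aᴴ := rowNorm_mul _ _
      _ ≤ max (rowNorm B) (rowNorm Bᴴ) * max (rowNorm A) (rowNorm Aᴴ) :=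
        mul_le_mul (le_max_right _ _) (le_max_right _ _) (rowNorm_nonneg _)
          (le_trans (rowNorm_nonneg Bᴴ) (le_max_right _ _))
      _ = max (rowNorm A) (rowNorm Aᴴ) * max (rowNorm B) (rowNorm Bᴴ) := mul_comm _ _


set_option maxHeartbeats 1000000 in
lemma mnorm_diagMat {l q : ℕ} (hlq : q ≤ l) (σ : Fin q → ℝ) (hpos : ∀ i, 0 < σ i) :
    mnorm (diagMat l q σ) ≤ Kbig σ := by
  have hK0 : (0:ℝ) ≤ Kbig σ := le_trans zero_le_one (le_max_left _ _)
  have hσK : ∀ j : Fin q, σ j ≤ Kbig σ := fun j =>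
    le_trans (le_ciSup (Set.finite_range σ).bddAbove j) (le_max_right _ _)
  apply max_le
  · apply rowNorm_le _ hK0
    intro i
    by_cases h : (i : ℕ) < q
    · have : ∑ j, ‖diagMat l q σ i j‖ = ‖diagMat l q σ i ⟨i, h⟩‖ := by
        apply Finset.sum_eq_single_of_mem (⟨(i:ℕ), h⟩ : Fin q) (Finset.mem_univ _)
        · intro j _ hj
          have : (i : ℕ) ≠ (j : ℕ) := by
            intro he; apply hj; exact Fin.ext he.symm
          simp [diagMat, this]
      rw [this]
      simp only [diagMat, if_true, eq_self_iff_true, Complex.norm_real, Real.norm_eq_abs]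
      rw [abs_of_pos (hpos _)]
      exact hσK _
    · have : ∑ j, ‖diagMat l q σ i j‖ = 0 := by
        apply Finset.sum_eq_zero
        intro j _
        have : (i : ℕ) ≠ (j : ℕ) := by
          intro he; exact h (he ▸ j.isLt)
        simp [diagMat, this]
      rw [this]; exact hK0
  · apply rowNorm_le _ hK0
    intro j
    have hjl : (j : ℕ) < l := lt_of_lt_of_le j.isLt hlq
    have : ∑ i, ‖(diagMat l q σ)ᴴ j i‖ = ‖(diagMat l q σ)ᴴ j ⟨(j:ℕ), hjl⟩‖ := by
      apply Finset.sum_eq_single_of_mem (⟨(j:ℕ), hjl⟩ : Fin l) (Finset.mem_univ _)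
      · intro i _ hi
        have : ((i : Fin l) : ℕ) ≠ (j : ℕ) := by
          intro he; apply hi; exact Fin.ext he
        simp [diagMat, conjTranspose_apply, this]
    rw [this]
    have h2 : (diagMat l q σ)ᴴ j ⟨(j:ℕ), hjl⟩ = ((σ j : ℝ) : ℂ) := by
      simp [conjTranspose_apply, diagMat, Complex.conj_ofReal]
    rw [h2, Complex.norm_real, Real.norm_eq_abs, abs_of_pos (hpos _)]
    exact hσK _


set_option maxHeartbeats 2000000 in
/-- Proposition 6.1: bound on `Δ₁ = (I+Ω)(Δ+Σ)(I+Λ) − Σ`. -/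
theorem delta1_bound {l q : ℕ} (hlq : q ≤ l) (ε w a b : ℝ)
    (hε : 0 ≤ ε) (hw : 0 ≤ w) (ha : 0 < a) (hb : 0 < b)
    (σ : Fin q → ℝ) (hpos : ∀ i, 0 < σ i) (hdist : ∀ i j, i ≠ j → σ i ≠ σ j)
    (Δ : Matrix (Fin l) (Fin q) ℂ) (Ω : Matrix (Fin l) (Fin l) ℂ)
    (Λ : Matrix (Fin q) (Fin q) ℂ) (hΩH : Ωᴴ = Ω)
    (hΔ : mnorm Δ ≤ ε / (kappa σ ^ a * Kbig σ ^ b))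
    (hΩ : mnorm Ω ≤ w * ε / (kappa σ ^ a * Kbig σ ^ (b + 1)))
    (hΛ : mnorm Λ ≤ w * ε / (kappa σ ^ a * Kbig σ ^ (b + 1))) :
    mnorm ((1 + Ω) * (Δ + diagMat l q σ) * (1 + Λ) - diagMat l q σ) ≤
      ((1 + w * ε) ^ 2 + 2 * w + w ^ 2 * ε) * ε / (kappa σ ^ a * Kbig σ ^ b) := by
  have hK1 : (1:ℝ) ≤ Kbig σ := le_max_left _ _
  have hκ1 : (1:ℝ) ≤ kappa σ := le_max_left _ _
  have hKpos : (0:ℝ) < Kbig σ := lt_of_lt_of_le one_pos hK1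
  have hκa : (1:ℝ) ≤ kappa σ ^ a := Real.one_le_rpow hκ1 ha.le
  have hKb : (1:ℝ) ≤ Kbig σ ^ b := Real.one_le_rpow hK1 hb.le
  have hKb1 : Kbig σ ^ (b+1) = Kbig σ ^ b * Kbig σ := by
    rw [Real.rpow_add hKpos, Real.rpow_one]
  have hD1 : (1:ℝ) ≤ kappa σ ^ a * Kbig σ ^ b := by nlinarith
  have hD1' : (1:ℝ) ≤ kappa σ ^ a * Kbig σ ^ (b+1) := by
    rw [hKb1]; nlinarith
  set δ := ε / (kappa σ ^ a * Kbig σ ^ b) with hδdef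
  set ω := w * ε / (kappa σ ^ a * Kbig σ ^ (b+1)) with hωdef
  have hδ0 : 0 ≤ δ := div_nonneg hε (by linarith)
  have hω0 : 0 ≤ ω := div_nonneg (mul_nonneg hw hε) (by linarith)
  have hωK : ω * Kbig σ = w * δ := by
    rw [hωdef, hδdef, hKb1]
    have h1 : kappa σ ^ a ≠ 0 := by positivity
    have h2 : Kbig σ ^ b ≠ 0 := by positivity
    have h3 : Kbig σ ≠ 0 := ne_of_gt hKpos
    field_simp
  have hωε : ω ≤ w * ε := div_le_self (mul_nonneg hw hε) hD1'
  have hSn : mnorm (diagMat l q σ) ≤ Kbig σ := mnorm_diagMat hlq σ hpos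
  set Sm := diagMat l q σ with hSdef
  have hexp : (1 + Ω) * (Δ + Sm) * (1 + Λ) - Sm
      = Δ + Ω * Δ + Ω * Sm + Δ * Λ + Sm * Λ + Ω * Δ * Λ + Ω * Sm * Λ := by
    simp only [Matrix.add_mul, Matrix.mul_add, Matrix.one_mul, Matrix.mul_one]
    abel
  have bΩΔ : mnorm (Ω * Δ) ≤ ω * δ :=
    le_trans (mnorm_mul _ _) (mul_le_mul hΩ hΔ (mnorm_nonneg _) hω0)
  have bOS : mnorm (Ω * Sm) ≤ ω * Kbig σ :=
    le_trans (mnorm_mul _ _) (mul_le_mul hΩ hSn (mnorm_nonneg _) hω0)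
  have bΔΛ : mnorm (Δ * Λ) ≤ δ * ω :=
    le_trans (mnorm_mul _ _) (mul_le_mul hΔ hΛ (mnorm_nonneg _) hδ0)
  have bSL : mnorm (Sm * Λ) ≤ Kbig σ * ω :=
    le_trans (mnorm_mul _ _) (mul_le_mul hSn hΛ (mnorm_nonneg _) hKpos.le)
  have bΩΔΛ : mnorm (Ω * Δ * Λ) ≤ ω * δ * ω :=
    le_trans (mnorm_mul _ _) (mul_le_mul bΩΔ hΛ (mnorm_nonneg _) (mul_nonneg hω0 hδ0))
  have bOSL : mnorm (Ω * Sm * Λ) ≤ ω * Kbig σ * ω :=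
    le_trans (mnorm_mul _ _)
      (mul_le_mul bOS hΛ (mnorm_nonneg _) (mul_nonneg hω0 hKpos.le))
  have total : mnorm ((1 + Ω) * (Δ + Sm) * (1 + Λ) - Sm) ≤
      δ + ω * δ + ω * Kbig σ + δ * ω + Kbig σ * ω + ω * δ * ω + ω * Kbig σ * ω := by
    rw [hexp]
    refine (mnorm_add _ _).trans (add_le_add ((mnorm_add _ _).trans (add_le_add
      ((mnorm_add _ _).trans (add_le_add ((mnorm_add _ _).trans (add_le_add
      ((mnorm_add _ _).trans (add_le_add ((mnorm_add _ _).trans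
      (add_le_add hΔ bΩΔ)) bOS)) bΔΛ)) bSL)) bΩΔΛ)) bOSL)
  have hrhs : ((1 + w * ε) ^ 2 + 2 * w + w ^ 2 * ε) * ε / (kappa σ ^ a * Kbig σ ^ b)
      = ((1 + w * ε) ^ 2 + 2 * w + w ^ 2 * ε) * δ := by
    rw [hδdef, mul_div_assoc]
  rw [hrhs]
  have e1 : ω * δ ≤ w * ε * δ := mul_le_mul_of_nonneg_right hωε hδ0
  have e2 : ω * Kbig σ * ω ≤ w * δ * (w * ε) := by
    rw [hωK]; exact mul_le_mul_of_nonneg_left hωε (mul_nonneg hw hδ0)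
  have e3 : ω * δ * ω ≤ w * ε * δ * (w * ε) := by
    exact mul_le_mul e1 hωε hω0 (mul_nonneg (mul_nonneg hw hε) hδ0)
  have hδε : δ ≤ ε := div_le_self hε hD1
  nlinarith [mul_nonneg hw hδ0, mul_nonneg (mul_nonneg hw hε) hδ0, hωK,
    mul_nonneg hε hδ0, sq_nonneg (w * ε)]
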